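/- With G, g, J as above, if additionally there is a constant C such that J(2^n) ≥ −C for all but finitely many n, then the Hilberg exponents are equal: hilb(n ↦ G(n) − n·g) = hilb(J). -/

import Mathlib

open Filter Real Finset

noncomputable def logPlus (x : ℝ) : ℝ := if 0 ≤ x then Real.log (x + 1) else 0

/-- The Hilberg exponent of a sequence. -/
noncomputable def hilb (s : ℕ → ℝ) : ℝ :=
  Filter.limsup (fun n : ℕ => logPlus (s (2 ^ n)) / (n * Real.log 2)) Filter.atTop

lemma logPlus_nonneg (x : ℝ) : 0 ≤ logPlus x := by
  unfold logPlus; split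
  · exact Real.log_nonneg (by linarith)
  · exact le_refl 0

lemma quot_nonneg (s : ℕ → ℝ) (n : ℕ) :
    0 ≤ logPlus (s (2 ^ n)) / (n * Real.log 2) :=
  div_nonneg (logPlus_nonneg _) (mul_nonneg (Nat.cast_nonneg n) (Real.log_nonneg one_le_two))

lemma hilb_nonneg (s : ℕ → ℝ) (hb : IsBoundedUnder (· ≤ ·) atTop
    (fun n : ℕ => logPlus (s (2 ^ n)) / (n * Real.log 2))) : 0 ≤ hilb s :=
  le_limsup_of_frequently_le (Frequently.of_forall (quot_nonneg s)) hb

lemma quot_eventually_le (s : ℕ → ℝ) (B c δ : ℝ) (hB : 1 ≤ B) (hc : 0 ≤ c) (hδ : 0 < δ)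
    (h : ∀ᶠ n : ℕ in atTop, s (2 ^ n) ≤ B * (2:ℝ) ^ (c * n)) :
    ∀ᶠ n : ℕ in atTop, logPlus (s (2 ^ n)) / (n * Real.log 2) ≤ c + δ := by
  have hN : ∀ᶠ n : ℕ in atTop, Real.log (2 * B) / (n * Real.log 2) ≤ δ := by
    have := Filter.Tendsto.div_atTop (a := Real.log (2 * B)) tendsto_const_nhds
      (Filter.Tendsto.atTop_mul_const (Real.log_pos one_lt_two) tendsto_natCast_atTop_atTop)
    exact this.eventually (eventually_le_nhds hδ) |>.mono (fun n hn => hn)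
  filter_upwards [h, hN, eventually_ge_atTop 1] with n hn hN1 hn1
  have hnpos : (0:ℝ) < n * Real.log 2 := by
    have : (1:ℝ) ≤ (n:ℝ) := by exact_mod_cast hn1
    nlinarith [Real.log_pos one_lt_two]
  have hrpow : (1:ℝ) ≤ (2:ℝ) ^ (c * n) := by
    apply Real.one_le_rpow one_le_two (by positivity)
  have hlog : logPlus (s (2 ^ n)) ≤ Real.log (2 * B) + c * n * Real.log 2 := by
    unfold logPlus; split
    · have h1 : s (2 ^ n) + 1 ≤ 2 * B * (2:ℝ) ^ (c * n) := by nlinarith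
      have h2 : Real.log (s (2 ^ n) + 1) ≤ Real.log (2 * B * (2:ℝ) ^ (c * n)) :=
        Real.log_le_log (by linarith) h1
      rwa [Real.log_mul (by positivity) (by positivity),
        Real.log_rpow two_pos] at h2
    · have h1 : (0:ℝ) ≤ Real.log (2 * B) := Real.log_nonneg (by linarith)
      have h2 : (0:ℝ) ≤ c * n * Real.log 2 := by positivity
      linarith
  rw [div_le_iff₀ hnpos]
  calc logPlus (s (2 ^ n)) ≤ Real.log (2 * B) + c * n * Real.log 2 := hlog
    _ ≤ δ * (n * Real.log 2) + c * (n * Real.log 2) := by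
        have := (div_le_iff₀ hnpos).mp hN1
        nlinarith
    _ = (c + δ) * (n * Real.log 2) := by ring

/-- If eventually `s (2^n) ≤ B * 2^(c*n)` then `hilb s ≤ c`. -/
lemma hilb_le_of_bound (s : ℕ → ℝ) (B c : ℝ) (hB : 1 ≤ B) (hc : 0 ≤ c)
    (h : ∀ᶠ n : ℕ in atTop, s (2 ^ n) ≤ B * (2:ℝ) ^ (c * n)) : hilb s ≤ c := by
  have key : ∀ δ : ℝ, 0 < δ → hilb s ≤ c + δ := fun δ hδ =>
    Filter.limsup_le_of_le (isCoboundedUnder_le_of_le _ (quot_nonneg s))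
      (quot_eventually_le s B c δ hB hc hδ h)
  by_contra hcon
  push_neg at hcon
  have := key ((hilb s - c) / 2) (by linarith)
  linarith

lemma isBounded_of_bound (s : ℕ → ℝ) (B c : ℝ) (hB : 1 ≤ B) (hc : 0 ≤ c)
    (h : ∀ᶠ n : ℕ in atTop, s (2 ^ n) ≤ B * (2:ℝ) ^ (c * n)) :
    IsBoundedUnder (· ≤ ·) atTop
      (fun n : ℕ => logPlus (s (2 ^ n)) / (n * Real.log 2)) :=
  ⟨c + 1, eventually_map.mpr (quot_eventually_le s B c 1 hB hc one_pos h)⟩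

/-- If `hilb s < c` then eventually `s (2^n) ≤ 2^(c*n)`. -/
lemma bound_of_hilb_lt (s : ℕ → ℝ) (c : ℝ)
    (hb : IsBoundedUnder (· ≤ ·) atTop
      (fun n : ℕ => logPlus (s (2 ^ n)) / (n * Real.log 2)))
    (h : hilb s < c) : ∀ᶠ n : ℕ in atTop, s (2 ^ n) ≤ (2:ℝ) ^ (c * n) := by
  have hev := eventually_lt_of_limsup_lt h hb
  filter_upwards [hev, eventually_ge_atTop 1] with n hn hn1
  have hnpos : (0:ℝ) < n * Real.log 2 := by
    have : (1:ℝ) ≤ (n:ℝ) := by exact_mod_cast hn1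
    nlinarith [Real.log_pos one_lt_two]
  have hlt : logPlus (s (2 ^ n)) < c * (n * Real.log 2) := by
    have := (div_lt_iff₀ hnpos).mp hn
    linarith
  by_cases hs : 0 ≤ s (2 ^ n)
  · have : Real.log (s (2 ^ n) + 1) < Real.log ((2:ℝ) ^ (c * n)) := by
      rw [Real.log_rpow two_pos]
      unfold logPlus at hlt; rw [if_pos hs] at hlt; linarith
    have := (Real.log_lt_log_iff (by linarith) (by positivity)).mp this
    linarith
  · push_neg at hs
    have : (0:ℝ) ≤ (2:ℝ) ^ (c * n) := by positivity
    linarith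

lemma geom_bound {r : ℝ} (h0 : 0 ≤ r) (h1 : r < 1) (m : ℕ) :
    ∑ k ∈ Finset.range m, r ^ k ≤ 1 / (1 - r) := by
  rw [geom_sum_eq (ne_of_lt h1)]
  have hm : (0:ℝ) ≤ r ^ m := pow_nonneg h0 m
  have key : (r ^ m - 1) / (r - 1) = (1 - r ^ m) / (1 - r) := by
    rw [div_eq_div_iff (by linarith) (by linarith)]; ring
  rw [key]
  gcongr
  · linarith

set_option maxHeartbeats 2000000 in
theorem hilberg_redundancy_eq (G : ℕ → ℝ) (g : ℝ)
    (hg : Filter.Tendsto (fun n : ℕ => G n / n) Filter.atTop (nhds g))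
    (hJ : ∃ C : ℝ, ∀ᶠ n : ℕ in Filter.atTop,
      2 * G (2 ^ n) - G (2 * 2 ^ n) ≥ -C) :
    hilb (fun n => G n - n * g) = hilb (fun n => 2 * G n - G (2 * n)) := by
  set d : ℕ → ℝ := fun n => G (2 ^ n) - (2 ^ n : ℕ) * g with hd
  set j : ℕ → ℝ := fun n => 2 * d n - d (n + 1) with hj
  have hsD : ∀ n : ℕ, G (2 ^ n) - ((2 ^ n : ℕ) : ℝ) * g = d n := fun n => rfl
  have hsJ : ∀ n : ℕ, 2 * G (2 ^ n) - G (2 * 2 ^ n) = j n := by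
    intro n
    simp only [hj, hd]
    have h2 : 2 * 2 ^ n = 2 ^ (n + 1) := by ring
    rw [h2]
    push_cast [pow_succ]
    ring
  -- d m / 2^m → 0
  have t1 : Tendsto (fun m : ℕ => d m / 2 ^ m) atTop (nhds 0) := by
    have hcomp : Tendsto (fun m : ℕ => G (2 ^ m) / ((2 ^ m : ℕ) : ℝ)) atTop (nhds g) :=
      hg.comp (tendsto_pow_atTop_atTop_of_one_lt (α := ℕ) one_lt_two)
    have := hcomp.sub_const g
    simp only [sub_self] at this
    apply this.congr
    intro m
    have hpos : ((2 ^ m : ℕ) : ℝ) ≠ 0 := by positivity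
    field_simp [hd]
    simp only [hd]; push_cast; ring
  have lim0 : ∀ n : ℕ, Tendsto (fun m : ℕ => d (n + m) / 2 ^ m) atTop (nhds 0) := by
    intro n
    have := (t1.comp (tendsto_add_atTop_nat n)).const_mul ((2 : ℝ) ^ n)
    rw [mul_zero] at this
    apply this.congr
    intro m
    simp only [Function.comp_apply]
    rw [add_comm m n, pow_add]
    have h2 : ((2:ℝ) ^ m) ≠ 0 := by positivity
    have h3 : ((2:ℝ) ^ n) ≠ 0 := by positivity
    field_simp
  have tele : ∀ n m : ℕ, ∑ k ∈ Finset.range m, j (n + k) / 2 ^ (k + 1)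
      = d n - d (n + m) / 2 ^ m := by
    intro n m
    induction m with
    | zero => simp
    | succ m ih =>
      rw [Finset.sum_range_succ, ih]
      have hjj : j (n + m) = 2 * d (n + m) - d (n + m + 1) := rfl
      have hnm : n + (m + 1) = (n + m) + 1 := by ring
      rw [hjj, hnm, pow_succ]
      have h2 : ((2:ℝ) ^ m) ≠ 0 := by positivity
      field_simp
      ring
  have dlim : ∀ n : ℕ, Tendsto (fun m : ℕ => ∑ k ∈ Finset.range m, j (n + k) / 2 ^ (k + 1))
      atTop (nhds (d n)) := by
    intro n
    have := (tendsto_const_nhds (x := d n) (f := atTop (α := ℕ))).sub (lim0 n)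
    rw [sub_zero] at this
    apply this.congr
    intro m
    rw [tele]
  have hjd : ∀ n, j n = 2 * d n - d (n + 1) := fun n => by rw [hj]
  clear_value d j
  -- |d n| ≤ 2^n eventually
  have hDabs : ∀ᶠ n : ℕ in atTop, |d n| ≤ 2 ^ n := by
    have h1 : ∀ᶠ m : ℕ in atTop, |d m| / 2 ^ m < 1 := by
      have := Metric.tendsto_nhds.mp t1 1 one_pos
      simpa [Real.dist_eq, abs_div, eventually_atTop] using this
    filter_upwards [h1] with m hm
    have h2 : (0:ℝ) < 2 ^ m := by positivity
    rw [div_lt_one h2] at hm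
    linarith
  obtain ⟨M, hM⟩ := eventually_atTop.mp hDabs
  -- eventual polynomial-type bounds for both sequences
  have hrpow1 : ∀ n : ℕ, (2:ℝ) ^ ((1:ℝ) * n) = 2 ^ n := by
    intro n
    rw [one_mul, Real.rpow_natCast]
  have hDbound : ∀ᶠ n : ℕ in atTop,
      (fun n => G n - n * g) (2 ^ n) ≤ 1 * (2:ℝ) ^ ((1:ℝ) * n) := by
    filter_upwards [hDabs] with n hn
    show G (2 ^ n) - ((2 ^ n : ℕ) : ℝ) * g ≤ 1 * (2:ℝ) ^ ((1:ℝ) * n)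
    rw [hsD, one_mul, hrpow1]
    exact le_trans (le_abs_self _) hn
  have hJbound : ∀ᶠ n : ℕ in atTop,
      (fun n => 2 * G n - G (2 * n)) (2 ^ n) ≤ 4 * (2:ℝ) ^ ((1:ℝ) * n) := by
    filter_upwards [eventually_ge_atTop M] with n hn
    show 2 * G (2 ^ n) - G (2 * 2 ^ n) ≤ 4 * (2:ℝ) ^ ((1:ℝ) * n)
    rw [hsJ, hrpow1]
    have h1 := hM n hn
    have h2 := hM (n + 1) (by omega)
    have ha := abs_le.mp h1
    have hb := abs_le.mp h2
    have hthis := hjd n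
    rw [hthis, pow_succ] at *
    nlinarith [pow_pos (two_pos (α := ℝ)) n]
  have hbD := isBounded_of_bound (fun n => G n - n * g) 1 1 le_rfl zero_le_one hDbound
  have hbJ := isBounded_of_bound (fun n => 2 * G n - G (2 * n)) 4 1 (by norm_num) zero_le_one
    hJbound
  have hilbD_le_one : hilb (fun n => G n - n * g) ≤ 1 :=
    hilb_le_of_bound _ 1 1 le_rfl zero_le_one hDbound
  have hilbD_nonneg := hilb_nonneg (fun n => G n - n * g) hbD
  have hilbJ_nonneg := hilb_nonneg (fun n => 2 * G n - G (2 * n)) hbJ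
  -- Key A : upper bound on hilb D from an exponential bound on j
  have keyA : ∀ c : ℝ, 0 ≤ c → c < 1 → (∀ᶠ k : ℕ in atTop, j k ≤ (2:ℝ) ^ (c * k)) →
      hilb (fun n => G n - n * g) ≤ c := by
    intro c hc0 hc1 hjle
    set r : ℝ := (2:ℝ) ^ c / 2 with hr
    have h2c : (0:ℝ) < (2:ℝ) ^ c := Real.rpow_pos_of_pos two_pos c
    have hr0 : 0 ≤ r := by positivity
    have hr1 : r < 1 := by
      have : (2:ℝ) ^ c < (2:ℝ) ^ (1:ℝ) := Real.rpow_lt_rpow_of_exponent_lt one_lt_two hc1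
      rw [Real.rpow_one] at this
      rw [hr, div_lt_one two_pos]
      exact this
    set K : ℝ := 1 / (2 * (1 - r)) with hK
    have h1r : 0 < 1 - r := by linarith
    have hK0 : 0 < K := by
      rw [hK]; positivity
    obtain ⟨N, hN⟩ := eventually_atTop.mp hjle
    have hdb : ∀ n, N ≤ n → d n ≤ K * (2:ℝ) ^ (c * n) := by
      intro n hn
      apply le_of_tendsto (dlim n)
      apply Eventually.of_forall
      intro m
      calc ∑ k ∈ Finset.range m, j (n + k) / 2 ^ (k + 1)
          ≤ ∑ k ∈ Finset.range m, (2:ℝ) ^ (c * (n + k : ℕ)) / 2 ^ (k + 1) := by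
            apply Finset.sum_le_sum
            intro k _
            have hden : (0:ℝ) < 2 ^ (k + 1) := by positivity
            gcongr
            exact hN (n + k) (by omega)
        _ = ∑ k ∈ Finset.range m, (2:ℝ) ^ (c * n) / 2 * r ^ k := by
            apply Finset.sum_congr rfl
            intro k _
            have e1 : (2:ℝ) ^ (c * (n + k : ℕ)) = (2:ℝ) ^ (c * n) * ((2:ℝ) ^ c) ^ k := by
              rw [← Real.rpow_natCast ((2:ℝ) ^ c) k, ← Real.rpow_mul (by norm_num),
                ← Real.rpow_add two_pos]
              congr 1
              push_cast
              ring
            rw [e1, hr, div_pow, pow_succ]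
            field_simp
        _ = (2:ℝ) ^ (c * n) / 2 * ∑ k ∈ Finset.range m, r ^ k := by
            rw [Finset.mul_sum]
        _ ≤ (2:ℝ) ^ (c * n) / 2 * (1 / (1 - r)) := by
            have hpos : (0:ℝ) ≤ (2:ℝ) ^ (c * n) / 2 := by positivity
            exact mul_le_mul_of_nonneg_left (geom_bound hr0 hr1 m) hpos
        _ = K * (2:ℝ) ^ (c * n) := by
            rw [hK]
            field_simp
    apply hilb_le_of_bound _ (max 1 K) c (le_max_left _ _) hc0
    filter_upwards [eventually_ge_atTop N] with n hn
    show G (2 ^ n) - ((2 ^ n : ℕ) : ℝ) * g ≤ _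
    rw [hsD]
    calc d n ≤ K * (2:ℝ) ^ (c * n) := hdb n hn
      _ ≤ max 1 K * (2:ℝ) ^ (c * n) := by
          apply mul_le_mul_of_nonneg_right (le_max_right _ _) (by positivity)
  -- Key B : j n ≤ 2 d n + C' eventually
  obtain ⟨C, hC⟩ := hJ
  set C' : ℝ := max C 0 with hC'
  have hC'0 : 0 ≤ C' := le_max_right C 0
  clear_value C'
  have hjlow : ∀ᶠ k : ℕ in atTop, -C' ≤ j k := by
    filter_upwards [hC] with k hk
    rw [hsJ k] at hk
    have : -C' ≤ -C := by rw [hC']; exact neg_le_neg (le_max_left C 0)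
    linarith
  obtain ⟨N₂, hN₂⟩ := eventually_atTop.mp hjlow
  have keyB : ∀ᶠ n : ℕ in atTop, j n ≤ 2 * d n + C' := by
    filter_upwards [eventually_ge_atTop N₂] with n hn
    have hlow : j n / 2 - C' / 2 ≤ d n := by
      apply ge_of_tendsto (dlim n)
      filter_upwards [eventually_ge_atTop 1] with m hm
      obtain ⟨m', rfl⟩ : ∃ m', m = m' + 1 := ⟨m - 1, by omega⟩
      rw [Finset.sum_range_succ']
      have hf0 : j (n + 0) / 2 ^ (0 + 1) = j n / 2 := by norm_num
      rw [hf0]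
      have h1 : ∀ i ∈ Finset.range m', -C' * (1/2 : ℝ) ^ i / 4 ≤ j (n + (i + 1)) / 2 ^ (i + 1 + 1) := by
        intro i _
        have hji := hN₂ (n + (i + 1)) (by omega)
        have he : -C' * (1/2 : ℝ) ^ i / 4 = -C' / 2 ^ (i + 1 + 1) := by
          have h2i : ((2:ℝ)) ^ (i + 1 + 1) = 2 ^ i * 4 := by ring
          rw [div_pow, one_pow, mul_one_div, div_div, h2i]
        rw [he]
        gcongr
      have h2 : -C' / 2 ≤ ∑ i ∈ Finset.range m', -C' * (1/2 : ℝ) ^ i / 4 := by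
        have he : ∑ i ∈ Finset.range m', -C' * (1/2 : ℝ) ^ i / 4
            = (-C' / 4) * ∑ i ∈ Finset.range m', (1/2 : ℝ) ^ i := by
          rw [Finset.mul_sum]
          apply Finset.sum_congr rfl
          intro i _
          ring
        rw [he]
        have hg2 : ∑ i ∈ Finset.range m', (1/2 : ℝ) ^ i ≤ 2 := by
          have := geom_bound (r := 1/2) (by norm_num) (by norm_num) m'
          norm_num at this
          linarith
        have hgpos : 0 ≤ ∑ i ∈ Finset.range m', (1/2 : ℝ) ^ i :=
          Finset.sum_nonneg fun i _ => by positivity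
        nlinarith
      have h3 := Finset.sum_le_sum h1
      linarith
    have h4 : j n ≤ 2 * d n + C' := by linarith
    exact h4
  -- Assembly
  apply le_antisymm
  · by_contra hcon
    push_neg at hcon
    set c : ℝ := (hilb (fun n => 2 * G n - G (2 * n)) + min 1 (hilb (fun n => G n - n * g))) / 2
      with hc
    have hmin : hilb (fun n => 2 * G n - G (2 * n)) < min 1 (hilb (fun n => G n - n * g)) :=
      lt_min (lt_of_lt_of_le hcon hilbD_le_one) hcon
    have hc0 : 0 ≤ c := by
      have := hilbJ_nonneg
      have h1 : 0 ≤ min 1 (hilb (fun n => G n - n * g)) :=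
        le_min zero_le_one hilbD_nonneg
      rw [hc]; linarith
    have hc1 : c < 1 := by
      have h1 := min_le_left 1 (hilb (fun n => G n - n * g))
      rw [hc]; nlinarith [hmin]
    have hcJ : hilb (fun n => 2 * G n - G (2 * n)) < c := by
      rw [hc]; linarith [hmin]
    have hcD : c < hilb (fun n => G n - n * g) := by
      have h2 := min_le_right 1 (hilb (fun n => G n - n * g))
      rw [hc]; nlinarith [hmin]
    have hjle : ∀ᶠ k : ℕ in atTop, j k ≤ (2:ℝ) ^ (c * k) := by
      filter_upwards [bound_of_hilb_lt (fun n => 2 * G n - G (2 * n)) c hbJ hcJ] with k hk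
      rwa [hsJ k] at hk
    have := keyA c hc0 hc1 hjle
    linarith
  · by_contra hcon
    push_neg at hcon
    set c : ℝ := (hilb (fun n => G n - n * g) + hilb (fun n => 2 * G n - G (2 * n))) / 2 with hc
    have hc0 : 0 ≤ c := by rw [hc]; linarith [hilbD_nonneg, hilbJ_nonneg]
    have hcD : hilb (fun n => G n - n * g) < c := by rw [hc]; linarith
    have hcJ : c < hilb (fun n => 2 * G n - G (2 * n)) := by rw [hc]; linarith
    have hdle : ∀ᶠ n : ℕ in atTop, d n ≤ (2:ℝ) ^ (c * n) := by
      filter_upwards [bound_of_hilb_lt (fun n => G n - n * g) c hbD hcD] with n hn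
      rwa [hsD n] at hn
    have hJle : ∀ᶠ n : ℕ in atTop,
        (fun n => 2 * G n - G (2 * n)) (2 ^ n) ≤ (C' + 2) * (2:ℝ) ^ (c * n) := by
      filter_upwards [hdle, keyB] with n hn hkb
      show 2 * G (2 ^ n) - G (2 * 2 ^ n) ≤ _
      rw [hsJ]
      have h1 : (1:ℝ) ≤ (2:ℝ) ^ (c * n) :=
        Real.one_le_rpow one_le_two (by positivity)
      nlinarith
    have := hilb_le_of_bound (fun n => 2 * G n - G (2 * n)) (C' + 2) c (by linarith) hc0 hJle
    linarith
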